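/- For any d ≥ m−1 and any m distinct points x₁,…,x_m in 𝔽_q^t with q > binom(m,2), the evaluation map from the space of polynomials of degree at most d in t variables over 𝔽_q to 𝔽_q^m, sending f to (f(x₁),…,f(x_m)), is a surjective linear map. -/
import Mathlib
set_option maxHeartbeats 1000000

open MvPolynomial Finset

/-- The evaluation map at `m` distinct points `x₁, …, x_m ∈ 𝔽_q^t`, from the space of
polynomials of total degree at most `d` to `𝔽_q^m`, is a surjective linear map,
provided `d ≥ m-1` and `q > binom(m,2)`. -/
theorem stmt_10 {F : Type} [Field F] [Fintype F] (t m d : ℕ)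
    (hq : m * (m - 1) / 2 < Fintype.card F) (hd : m - 1 ≤ d)
    (x : Fin m → (Fin t → F)) (hx : Function.Injective x) :
    Function.Surjective
      (LinearMap.pi (fun i : Fin m =>
        ((MvPolynomial.aeval (x i)).toLinearMap).comp
          (MvPolynomial.restrictTotalDegree (Fin t) F d).subtype)) := by
  classical
  -- separating linear polynomials
  have key : ∀ i j : Fin m, ∃ L : MvPolynomial (Fin t) F, L.totalDegree ≤ 1 ∧
      (i ≠ j → eval (x j) L = 0 ∧ eval (x i) L ≠ 0) := by
    intro i j
    by_cases h : i = j
    · exact ⟨1, le_of_eq_of_le totalDegree_one (Nat.zero_le 1), fun h' => absurd h h'⟩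
    · obtain ⟨k, hk⟩ := Function.ne_iff.mp (fun e => h (hx e))
      refine ⟨X k - C (x j k), ?_, fun _ => ⟨by simp, by simp [sub_eq_zero, hk]⟩⟩
      rw [sub_eq_add_neg]
      refine le_trans (totalDegree_add _ _) ?_
      rw [totalDegree_neg, totalDegree_C, totalDegree_X]
      exact max_le le_rfl (Nat.zero_le 1)
  choose L hL1 hL2 using key
  set P : Fin m → MvPolynomial (Fin t) F := fun i => ∏ j ∈ univ.erase i, L i j with hP
  have hPdeg : ∀ i, (P i).totalDegree ≤ m - 1 := by
    intro i
    refine le_trans (totalDegree_finset_prod _ _) ?_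
    calc ∑ j ∈ univ.erase i, (L i j).totalDegree
        ≤ ∑ j ∈ univ.erase i, 1 := Finset.sum_le_sum fun j _ => hL1 i j
      _ = m - 1 := by simp [Finset.card_erase_of_mem]
  have hPzero : ∀ i j : Fin m, j ≠ i → eval (x j) (P i) = 0 := by
    intro i j hji
    rw [hP]
    rw [map_prod]
    exact Finset.prod_eq_zero (Finset.mem_erase.mpr ⟨hji, Finset.mem_univ j⟩)
      ((hL2 i j (Ne.symm hji)).1)
  have hPne : ∀ i : Fin m, eval (x i) (P i) ≠ 0 := by
    intro i
    rw [hP, map_prod]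
    exact Finset.prod_ne_zero_iff.mpr fun j hj =>
      (hL2 i j (Ne.symm (Finset.mem_erase.mp hj).1)).2
  intro y
  set f : MvPolynomial (Fin t) F :=
    ∑ i, C (y i * (eval (x i) (P i))⁻¹) * P i with hf
  have hfdeg : f ∈ restrictTotalDegree (Fin t) F d := by
    rw [mem_restrictTotalDegree, hf]
    refine le_trans (totalDegree_finset_sum _ _) ?_
    refine Finset.sup_le fun i _ => ?_
    refine le_trans (totalDegree_mul _ _) ?_
    rw [totalDegree_C, zero_add]
    exact le_trans (hPdeg i) hd
  refine ⟨⟨f, hfdeg⟩, ?_⟩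
  funext i
  have : (aeval (x i)) f = eval (x i) f := by
    rw [← coe_aeval_eq_eval]; rfl
  simp only [LinearMap.pi_apply, LinearMap.comp_apply, Submodule.coe_subtype,
    AlgHom.toLinearMap_apply]
  rw [this, hf, map_sum]
  rw [Finset.sum_eq_single i]
  · rw [eval_mul, eval_C]
    rw [mul_assoc, inv_mul_cancel₀ (hPne i), mul_one]
  · intro j _ hj
    rw [eval_mul, hPzero j i (Ne.symm hj), mul_zero]
  · intro h; exact absurd (Finset.mem_univ i) h
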